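/- Let V ⊆ Mₙ(ℂ) be a complex linear subspace admitting an orthonormal basis (A₁, …, A_m) with respect to the Frobenius inner product consisting of Hermitian matrices. If the Hermitian matrix ∑ᵢ Aᵢ² has n pairwise distinct eigenvalues, then any two unitary matrices U, W ∈ Mₙ(ℂ) satisfying U V Uᴴ = V and W V Wᴴ = V commute: U·W = W·U. In particular, the automorphism group of the quantum graph V is abelian whenever its degree matrix has simple spectrum. -/

import Mathlib

open Matrix

lemma diag_of_commute_diagonal {n : Type*} [Fintype n] [DecidableEq n]
    (d : n → ℂ) (hd : Function.Injective d) (M : Matrix n n ℂ)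
    (h : M * diagonal d = diagonal d * M) :
    M = diagonal (fun i => M i i) := by
  ext i j
  by_cases hij : i = j
  · subst hij; simp
  · have h1 : (M * diagonal d) i j = (diagonal d * M) i j := by rw [h]
    rw [mul_diagonal, diagonal_mul] at h1
    have h2 : M i j * (d j - d i) = 0 := by ring_nf; linear_combination h1
    rcases mul_eq_zero.mp h2 with h3 | h3
    · simp [diagonal_apply_ne _ hij, h3]
    · exact absurd (hd (sub_eq_zero.mp h3)).symm hij

lemma conj_sum_sq (n m : ℕ) (V : Submodule ℂ (Matrix (Fin n) (Fin n) ℂ))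
    (A : Fin m → Matrix (Fin n) (Fin n) ℂ)
    (hmem : ∀ i, A i ∈ V)
    (hspan : V ≤ Submodule.span ℂ (Set.range A))
    (horth : ∀ i j, ((A i)ᴴ * A j).trace = if i = j then 1 else 0)
    (hherm : ∀ i, (A i).IsHermitian)
    (U : Matrix (Fin n) (Fin n) ℂ)
    (hU : U ∈ Matrix.unitaryGroup (Fin n) ℂ)
    (hUV : (fun x => U * x * Uᴴ) '' (V : Set (Matrix (Fin n) (Fin n) ℂ))
      = (V : Set (Matrix (Fin n) (Fin n) ℂ))) :
    U * (∑ i, A i ^ 2) * Uᴴ = ∑ i, A i ^ 2 := by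
  have hU1 : Uᴴ * U = 1 := by
    have := Matrix.mem_unitaryGroup_iff'.mp hU
    rwa [Matrix.star_eq_conjTranspose] at this
  have hU2 : U * Uᴴ = 1 := by
    have := Matrix.mem_unitaryGroup_iff.mp hU
    rwa [Matrix.star_eq_conjTranspose] at this
  set B : Fin m → Matrix (Fin n) (Fin n) ℂ := fun i => U * A i * Uᴴ with hBdef
  have hBmem : ∀ i, B i ∈ V := by
    intro i
    have : B i ∈ (fun x => U * x * Uᴴ) '' (V : Set (Matrix (Fin n) (Fin n) ℂ)) :=
      ⟨A i, hmem i, rfl⟩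
    rwa [hUV] at this
  have hBherm : ∀ i, (B i)ᴴ = B i := by
    intro i
    simp only [hBdef, conjTranspose_mul, conjTranspose_conjTranspose, (hherm i).eq,
      Matrix.mul_assoc]
  have hconjmul : ∀ a b : Matrix (Fin n) (Fin n) ℂ,
      (U * a * Uᴴ)ᴴ * (U * b * Uᴴ) = U * (aᴴ * b) * Uᴴ := by
    intro a b
    simp only [conjTranspose_mul, conjTranspose_conjTranspose, Matrix.mul_assoc]
    rw [show Uᴴ * (U * (b * Uᴴ)) = b * Uᴴ by rw [← Matrix.mul_assoc, hU1, Matrix.one_mul]]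
  have htrconj : ∀ X : Matrix (Fin n) (Fin n) ℂ, (U * X * Uᴴ).trace = X.trace := by
    intro X
    rw [trace_mul_cycle, hU1, Matrix.one_mul]
  have horthB : ∀ i j, ((B i)ᴴ * B j).trace = if i = j then 1 else 0 := by
    intro i j
    rw [hBdef]
    simp only
    rw [hconjmul, htrconj, horth]
  set c : Matrix (Fin m) (Fin m) ℂ := Matrix.of fun i j => ((A j)ᴴ * B i).trace with hcdef
  have hBc : ∀ i, B i = ∑ j, c i j • A j := by
    intro i
    obtain ⟨f, hf⟩ := (Submodule.mem_span_range_iff_exists_fun ℂ).mp (hspan (hBmem i))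
    have hc : ∀ j, c i j = f j := by
      intro j
      rw [hcdef]
      simp only [Matrix.of_apply]
      rw [← hf, Matrix.mul_sum]
      simp only [Matrix.mul_smul, trace_sum, trace_smul, horth, smul_eq_mul, mul_ite, mul_one,
        mul_zero, Finset.sum_ite_eq, Finset.mem_univ, if_true]
    rw [← hf]
    exact (Finset.sum_congr rfl fun j _ => by rw [hc j]).symm
  have hcc : c * cᴴ = 1 := by
    ext k i
    have hexp : ((B i)ᴴ * B k).trace = ∑ j, (starRingEnd ℂ) (c i j) * c k j := by
      rw [hBc i, hBc k]
      rw [conjTranspose_sum]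
      simp only [conjTranspose_smul, (fun j => (hherm j).eq : ∀ j, (A j)ᴴ = A j)]
      rw [Finset.sum_mul_sum]
      simp only [smul_mul_smul_comm, trace_sum, trace_smul, smul_eq_mul]
      have horth' : ∀ j l, (A j * A l).trace = if j = l then (1:ℂ) else 0 := by
        intro j l; rw [← (hherm j).eq]; exact horth j l
      simp only [horth', mul_ite, mul_one, mul_zero, Finset.sum_ite_eq, Finset.mem_univ, if_true]
      rfl
    rw [Matrix.mul_apply, Matrix.one_apply]
    calc ∑ j, c k j * cᴴ j i = ∑ j, (starRingEnd ℂ) (c i j) * c k j := by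
          refine Finset.sum_congr rfl fun j _ => ?_
          rw [conjTranspose_apply]; exact mul_comm _ _
      _ = if i = k then 1 else 0 := by rw [← hexp]; exact horthB i k
      _ = if k = i then 1 else 0 := by
          by_cases h : i = k
          · subst h; rfl
          · rw [if_neg h, if_neg (Ne.symm h)]
  have hcc' : cᴴ * c = 1 := mul_eq_one_comm.mp hcc
  have hsumB : ∑ i, B i ^ 2 = ∑ i, A i ^ 2 := by
    have h2 : ∀ i, B i ^ 2 = ∑ j, ∑ l, (c i j * star (c i l)) • (A j * A l) := by
      intro i
      rw [sq]
      nth_rewrite 2 [← hBherm i]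
      rw [hBc i, conjTranspose_sum]
      simp only [conjTranspose_smul, (fun j => (hherm j).eq : ∀ j, (A j)ᴴ = A j)]
      rw [Finset.sum_mul_sum]
      simp only [smul_mul_smul_comm]
    calc ∑ i, B i ^ 2 = ∑ i, ∑ j, ∑ l, (c i j * star (c i l)) • (A j * A l) :=
          Finset.sum_congr rfl fun i _ => h2 i
      _ = ∑ j, ∑ l, (∑ i, star (c i l) * c i j) • (A j * A l) := by
          rw [Finset.sum_comm]
          refine Finset.sum_congr rfl fun j _ => ?_
          rw [Finset.sum_comm]
          refine Finset.sum_congr rfl fun l _ => ?_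
          rw [Finset.sum_smul]
          exact Finset.sum_congr rfl fun i _ => by rw [mul_comm]
      _ = ∑ j, ∑ l, ((cᴴ * c) l j) • (A j * A l) := by
          refine Finset.sum_congr rfl fun j _ => Finset.sum_congr rfl fun l _ => ?_
          rw [Matrix.mul_apply]; rfl
      _ = ∑ j, A j ^ 2 := by
          rw [hcc']
          refine Finset.sum_congr rfl fun j _ => ?_
          simp only [Matrix.one_apply, ite_smul, one_smul, zero_smul, Finset.sum_ite_eq, Finset.sum_ite_eq',
            Finset.mem_univ, if_true, sq]
  calc U * (∑ i, A i ^ 2) * Uᴴ = ∑ i, B i ^ 2 := by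
        rw [Matrix.mul_sum, Matrix.sum_mul]
        refine Finset.sum_congr rfl fun i _ => ?_
        show U * A i ^ 2 * Uᴴ = (U * A i * Uᴴ) ^ 2
        rw [sq, sq]
        simp only [Matrix.mul_assoc]
        rw [show Uᴴ * (U * (A i * Uᴴ)) = A i * Uᴴ by rw [← Matrix.mul_assoc, hU1, Matrix.one_mul]]
    _ = ∑ i, A i ^ 2 := hsumB

/-- If a subspace `V ⊆ Mₙ(ℂ)` has a Frobenius-orthonormal basis of Hermitian matrices `Aᵢ`
and the matrix `∑ᵢ Aᵢ²` has `n` pairwise distinct eigenvalues, then any two unitaries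
preserving `V` under conjugation commute (the automorphism group of the quantum graph `V`
is abelian whenever the degree matrix has simple spectrum). -/
theorem commute_of_simple_spectrum_degree_matrix
    (n m : ℕ) (V : Submodule ℂ (Matrix (Fin n) (Fin n) ℂ))
    (A : Fin m → Matrix (Fin n) (Fin n) ℂ)
    (hmem : ∀ i, A i ∈ V)
    (hspan : V ≤ Submodule.span ℂ (Set.range A))
    (horth : ∀ i j, ((A i)ᴴ * A j).trace = if i = j then 1 else 0)
    (hherm : ∀ i, (A i).IsHermitian)
    (hS : (∑ i, A i ^ 2).IsHermitian)
    (hsimple : Function.Injective hS.eigenvalues)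
    (U W : Matrix (Fin n) (Fin n) ℂ)
    (hU : U ∈ Matrix.unitaryGroup (Fin n) ℂ) (hW : W ∈ Matrix.unitaryGroup (Fin n) ℂ)
    (hUV : (fun x => U * x * Uᴴ) '' (V : Set (Matrix (Fin n) (Fin n) ℂ))
      = (V : Set (Matrix (Fin n) (Fin n) ℂ)))
    (hWV : (fun x => W * x * Wᴴ) '' (V : Set (Matrix (Fin n) (Fin n) ℂ))
      = (V : Set (Matrix (Fin n) (Fin n) ℂ))) :
    U * W = W * U := by
  set S : Matrix (Fin n) (Fin n) ℂ := ∑ i, A i ^ 2 with hSdef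
  have hU1 : Uᴴ * U = 1 := by
    have := Matrix.mem_unitaryGroup_iff'.mp hU
    rwa [Matrix.star_eq_conjTranspose] at this
  have hW1 : Wᴴ * W = 1 := by
    have := Matrix.mem_unitaryGroup_iff'.mp hW
    rwa [Matrix.star_eq_conjTranspose] at this
  have hUS : U * S = S * U := by
    have h := conj_sum_sq n m V A hmem hspan horth hherm U hU hUV
    have h2 := congrArg (· * U) h
    rw [Matrix.mul_assoc (U * S), hU1, Matrix.mul_one] at h2
    exact h2
  have hWS : W * S = S * W := by
    have h := conj_sum_sq n m V A hmem hspan horth hherm W hW hWV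
    have h2 := congrArg (· * W) h
    rw [Matrix.mul_assoc (W * S), hW1, Matrix.mul_one] at h2
    exact h2
  set P : Matrix (Fin n) (Fin n) ℂ := (hS.eigenvectorUnitary : Matrix (Fin n) (Fin n) ℂ)
    with hPdef
  set d : Fin n → ℂ := RCLike.ofReal ∘ hS.eigenvalues with hddef
  have hP1 : Pᴴ * P = 1 := by
    have := Matrix.mem_unitaryGroup_iff'.mp (hS.eigenvectorUnitary).2
    rwa [Matrix.star_eq_conjTranspose] at this
  have hP2 : P * Pᴴ = 1 := by
    have := Matrix.mem_unitaryGroup_iff.mp (hS.eigenvectorUnitary).2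
    rwa [Matrix.star_eq_conjTranspose] at this
  have hspec : S = P * diagonal d * Pᴴ := by
    have := hS.spectral_theorem
    rwa [Unitary.conjStarAlgAut_apply, Matrix.star_eq_conjTranspose] at this
  have hd : Function.Injective d := by
    intro a b hab
    exact hsimple (RCLike.ofReal_injective hab)
  have key : ∀ X : Matrix (Fin n) (Fin n) ℂ, X * S = S * X →
      (Pᴴ * X * P) * diagonal d = diagonal d * (Pᴴ * X * P) := by
    intro X hX
    have h1 : Pᴴ * (X * S) * P = Pᴴ * (S * X) * P := by rw [hX]
    rw [hspec] at h1
    simp only [Matrix.mul_assoc] at h1 ⊢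
    rw [show Pᴴ * (P * (diagonal d * (Pᴴ * (X * P)))) = diagonal d * (Pᴴ * (X * P)) by
      rw [← Matrix.mul_assoc, hP1, Matrix.one_mul]] at h1
    rw [show diagonal d * (Pᴴ * P) = diagonal d by rw [hP1, Matrix.mul_one]] at h1
    exact h1
  have hM := diag_of_commute_diagonal d hd (Pᴴ * U * P) (key U hUS)
  have hN := diag_of_commute_diagonal d hd (Pᴴ * W * P) (key W hWS)
  have hcomm : (Pᴴ * U * P) * (Pᴴ * W * P) = (Pᴴ * W * P) * (Pᴴ * U * P) := by
    rw [hM, hN, diagonal_mul_diagonal, diagonal_mul_diagonal]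
    exact congrArg _ (funext fun i => mul_comm _ _)
  have hUeq : U = P * (Pᴴ * U * P) * Pᴴ := by
    simp only [Matrix.mul_assoc]
    rw [← Matrix.mul_assoc P Pᴴ, hP2, Matrix.one_mul, Matrix.mul_one]
  have hWeq : W = P * (Pᴴ * W * P) * Pᴴ := by
    simp only [Matrix.mul_assoc]
    rw [← Matrix.mul_assoc P Pᴴ, hP2, Matrix.one_mul, Matrix.mul_one]
  calc U * W = (P * (Pᴴ * U * P) * Pᴴ) * (P * (Pᴴ * W * P) * Pᴴ) := by rw [← hUeq, ← hWeq]
    _ = P * ((Pᴴ * U * P) * (Pᴴ * W * P)) * Pᴴ := by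
        simp only [Matrix.mul_assoc]
        rw [show Pᴴ * (P * (Pᴴ * (W * (P * Pᴴ)))) = Pᴴ * (W * (P * Pᴴ)) by
          rw [← Matrix.mul_assoc, hP1, Matrix.one_mul]]
    _ = P * ((Pᴴ * W * P) * (Pᴴ * U * P)) * Pᴴ := by rw [hcomm]
    _ = (P * (Pᴴ * W * P) * Pᴴ) * (P * (Pᴴ * U * P) * Pᴴ) := by
        simp only [Matrix.mul_assoc]
        rw [show Pᴴ * (P * (Pᴴ * (U * (P * Pᴴ)))) = Pᴴ * (U * (P * Pᴴ)) by
          rw [← Matrix.mul_assoc, hP1, Matrix.one_mul]]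
    _ = W * U := by rw [← hUeq, ← hWeq]
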